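/- arXiv:0806.2446 — 3 statements merged into one kernel-verified Lean document; each statement's English description precedes it below -/
import Mathlib

section
/- Suppose m* ∈ (0,1] satisfies either m* = 1, or H(G_{m*}|μ) = log 2. Then for every probability measure ν with H(ν|μ) ≤ log 2 and, in case m* = 1, H(ν|μ) ≤ H(G_1|μ), one has ∫φ dν − H(ν|μ) ≤ ∫φ dG_{m*} − H(G_{m*}|μ), with equality if and only if ν = G_{m*}. -/
open MeasureTheory ProbabilityTheory Filter Set

open Classical in
noncomputable def relEntropy {S : Type*} [MeasurableSpace S] (ν μ : Measure S) : EReal :=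
  if ν ≪ μ ∧ Integrable (llr ν μ) ν then ((∫ x, llr ν μ x ∂ν : ℝ) : EReal) else ⊤

/-- Young-type inequality: `t * a ≤ t * log t - t + exp a` for `t ≥ 0`. -/
lemma young_aux {t a : ℝ} (ht : 0 ≤ t) :
    t * a ≤ t * Real.log t - t + Real.exp a := by
  rcases eq_or_lt_of_le ht with h | h
  · simp [← h]; positivity
  · have h1 : (a - Real.log t) + 1 ≤ Real.exp (a - Real.log t) := by
      linarith [Real.add_one_le_exp (a - Real.log t)]
    have h2 : Real.exp (a - Real.log t) = Real.exp a / t := by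
      rw [Real.exp_sub, Real.exp_log h]
    rw [h2] at h1
    have h3 : (a - Real.log t + 1) * t ≤ Real.exp a := (le_div_iff₀ h).mp h1
    nlinarith

lemma sub_one_le_mul_log {t : ℝ} (ht : 0 ≤ t) : t - 1 ≤ t * Real.log t := by
  rcases eq_or_lt_of_le ht with h | h
  · simp [← h]
  · have h1 : (-Real.log t) + 1 ≤ Real.exp (-Real.log t) := by
      linarith [Real.add_one_le_exp (-Real.log t)]
    have h2 : Real.exp (-Real.log t) = 1 / t := by
      rw [Real.exp_neg, Real.exp_log h, one_div]
    rw [h2] at h1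
    have h3 : (-Real.log t + 1) * t ≤ 1 := (le_div_iff₀ h).mp h1
    nlinarith

lemma eq_one_of_mul_log_eq {t : ℝ} (ht : 0 ≤ t) (h : t * Real.log t = t - 1) :
    t = 1 := by
  by_contra hne
  rcases eq_or_lt_of_le ht with h0 | h0
  · rw [← h0] at h; norm_num at h
  · have hlog : -Real.log t ≠ 0 := by
      simp only [ne_eq, neg_eq_zero, Real.log_eq_zero]
      push_neg
      exact ⟨h0.ne', hne, by nlinarith⟩
    have h1 : (-Real.log t) + 1 < Real.exp (-Real.log t) :=
      Real.add_one_lt_exp hlog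
    have h2 : Real.exp (-Real.log t) = 1 / t := by
      rw [Real.exp_neg, Real.exp_log h0, one_div]
    rw [h2] at h1
    have h3 : (-Real.log t + 1) * t < 1 := (lt_div_iff₀ h0).mp h1
    nlinarith

/-- If `ν ≪ μ`, the relative entropy is finite and `exp φ`, `exp (-φ)` are `μ`-integrable,
then `φ` is `ν`-integrable. -/
lemma integrable_of_finite_llr {S : Type*} [MeasurableSpace S] {μ ν : Measure S}
    [IsFiniteMeasure μ] [IsFiniteMeasure ν] {φ : S → ℝ} (hφ : Measurable φ)
    (h1 : Integrable (fun x => Real.exp (φ x)) μ)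
    (h2 : Integrable (fun x => Real.exp (-φ x)) μ)
    (hac : ν ≪ μ) (hint : Integrable (llr ν μ) ν) : Integrable φ ν := by
  rw [← integrable_rnDeriv_smul_iff hac]
  have hll : Integrable (fun x => (ν.rnDeriv μ x).toReal • llr ν μ x) μ :=
    (integrable_rnDeriv_smul_iff hac).mpr hint
  have hfR : Integrable (fun x => (ν.rnDeriv μ x).toReal) μ :=
    Measure.integrable_toReal_rnDeriv
  have hg : Integrable (fun x => (ν.rnDeriv μ x).toReal * llr ν μ x -
      (ν.rnDeriv μ x).toReal + (Real.exp (φ x) + Real.exp (-φ x))) μ := by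
    exact ((hll.sub hfR).add (h1.add h2))
  refine hg.mono' ?_ ?_
  · exact ((Measure.measurable_rnDeriv ν μ).ennreal_toReal.smul hφ).aestronglyMeasurable
  · refine Filter.Eventually.of_forall fun x => ?_
    have htR : (0:ℝ) ≤ (ν.rnDeriv μ x).toReal := ENNReal.toReal_nonneg
    have hy := young_aux (a := |φ x|) htR
    have hexpabs : Real.exp |φ x| ≤ Real.exp (φ x) + Real.exp (-φ x) := by
      rcases abs_cases (φ x) with ⟨h, _⟩ | ⟨h, _⟩ <;> rw [h] <;>
        [linarith [Real.exp_pos (-φ x)]; linarith [Real.exp_pos (φ x)]]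
    have : ‖(ν.rnDeriv μ x).toReal • φ x‖ = (ν.rnDeriv μ x).toReal * |φ x| := by
      rw [smul_eq_mul, Real.norm_eq_abs, abs_mul, abs_of_nonneg htR]
    rw [this]
    simp only [smul_eq_mul, llr_def]
    nlinarith

/-- Gibbs' inequality with equality case. -/
lemma gibbs_ineq {S : Type*} [MeasurableSpace S] {ν G : Measure S}
    [IsProbabilityMeasure ν] [IsProbabilityMeasure G]
    (hac : ν ≪ G) (hint : Integrable (llr ν G) ν) :
    0 ≤ ∫ x, llr ν G x ∂ν ∧ (∫ x, llr ν G x ∂ν = 0 → ν = G) := by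
  have hKformula : ∫ x, llr ν G x ∂ν =
      ∫ x, (ν.rnDeriv G x).toReal * Real.log ((ν.rnDeriv G x).toReal) ∂G := by
    rw [← integral_rnDeriv_smul hac]
    simp [llr_def, smul_eq_mul]
  have hint' : Integrable
      (fun x => (ν.rnDeriv G x).toReal * Real.log ((ν.rnDeriv G x).toReal)) G := by
    have := (integrable_rnDeriv_smul_iff hac).mpr hint
    simpa [llr_def, smul_eq_mul] using this
  have hfR : Integrable (fun x => (ν.rnDeriv G x).toReal) G :=
    Measure.integrable_toReal_rnDeriv
  have hone : ∫ x, (ν.rnDeriv G x).toReal ∂G = 1 := by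
    rw [Measure.integral_toReal_rnDeriv hac]; simp
  have hD0 : ∀ x, 0 ≤ (ν.rnDeriv G x).toReal * Real.log ((ν.rnDeriv G x).toReal) -
      ((ν.rnDeriv G x).toReal - 1) := fun x =>
    sub_nonneg.mpr (sub_one_le_mul_log ENNReal.toReal_nonneg)
  have hDint : Integrable (fun x => (ν.rnDeriv G x).toReal * Real.log ((ν.rnDeriv G x).toReal) -
      ((ν.rnDeriv G x).toReal - 1)) G := hint'.sub (hfR.sub (integrable_const 1))
  have hsub : Integrable (fun x => (ν.rnDeriv G x).toReal - 1) G := hfR.sub (integrable_const 1)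
  have hDsum : ∫ x, ((ν.rnDeriv G x).toReal * Real.log ((ν.rnDeriv G x).toReal) -
      ((ν.rnDeriv G x).toReal - 1)) ∂G = ∫ x, llr ν G x ∂ν := by
    rw [integral_sub hint' hsub, integral_sub hfR (integrable_const 1), hone, hKformula]
    simp
  constructor
  · rw [← hDsum]
    exact integral_nonneg hD0
  · intro hK0
    have hzero : ∫ x, ((ν.rnDeriv G x).toReal * Real.log ((ν.rnDeriv G x).toReal) -
        ((ν.rnDeriv G x).toReal - 1)) ∂G = 0 := by rw [hDsum, hK0]
    have hae := (integral_eq_zero_iff_of_nonneg hD0 hDint).mp hzero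
    have hrn : ν.rnDeriv G =ᵐ[G] 1 := by
      filter_upwards [hae] with x hx
      have hx' : (ν.rnDeriv G x).toReal * Real.log ((ν.rnDeriv G x).toReal) =
          (ν.rnDeriv G x).toReal - 1 := by
        have : (ν.rnDeriv G x).toReal * Real.log ((ν.rnDeriv G x).toReal) -
            ((ν.rnDeriv G x).toReal - 1) = 0 := hx
        linarith
      have := eq_one_of_mul_log_eq ENNReal.toReal_nonneg hx'
      simpa [ENNReal.toReal_eq_one_iff] using this
    calc ν = G.withDensity (ν.rnDeriv G) := (Measure.withDensity_rnDeriv_eq ν G hac).symm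
    _ = G.withDensity 1 := withDensity_congr_ae hrn
    _ = G := by simp

theorem tilted_measure_maximizes_GVP
    {S : Type*} [MeasurableSpace S] (μ : Measure S) [IsProbabilityMeasure μ]
    (φ : S → ℝ) (hφ : Measurable φ)
    (hexp : ∀ l : ℝ, Integrable (fun x => Real.exp (l * φ x)) μ)
    (mstar : ℝ) (hmem : mstar ∈ Ioc (0 : ℝ) 1)
    (hcase : mstar = 1 ∨
      relEntropy (μ.tilted fun x => mstar * φ x) μ = (Real.log 2 : EReal))
    (ν : Measure S) [IsProbabilityMeasure ν]
    (hν : relEntropy ν μ ≤ (Real.log 2 : EReal))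
    (hν1 : mstar = 1 → relEntropy ν μ ≤ relEntropy (μ.tilted fun x => mstar * φ x) μ) :
    (∫ x, φ x ∂ν - (relEntropy ν μ).toReal ≤
      ∫ x, φ x ∂(μ.tilted fun x => mstar * φ x) -
        (relEntropy (μ.tilted fun x => mstar * φ x) μ).toReal) ∧
    ((∫ x, φ x ∂ν - (relEntropy ν μ).toReal =
      ∫ x, φ x ∂(μ.tilted fun x => mstar * φ x) -
        (relEntropy (μ.tilted fun x => mstar * φ x) μ).toReal) ↔
      ν = μ.tilted fun x => mstar * φ x) := by
  classical
  set f : S → ℝ := fun x => mstar * φ x with hf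
  set G : Measure S := μ.tilted f with hG
  have hexpf : Integrable (fun x => Real.exp (f x)) μ := hexp mstar
  have hGprob : IsProbabilityMeasure G := isProbabilityMeasure_tilted hexpf
  have hGμ : G ≪ μ := tilted_absolutelyContinuous μ f
  set Z : ℝ := ∫ x, Real.exp (f x) ∂μ with hZ
  have hZpos : 0 < Z := integral_exp_pos hexpf
  -- ν has finite relative entropy
  have hνcond : ν ≪ μ ∧ Integrable (llr ν μ) ν := by
    by_contra h
    rw [relEntropy, if_neg h] at hν
    exact absurd (lt_of_le_of_lt hν (EReal.coe_lt_top _)) (lt_irrefl _)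
  obtain ⟨hνμ, hνint⟩ := hνcond
  have hEν : relEntropy ν μ = ((∫ x, llr ν μ x ∂ν : ℝ) : EReal) := by
    rw [relEntropy, if_pos ⟨hνμ, hνint⟩]
  set Hν : ℝ := ∫ x, llr ν μ x ∂ν with hHν
  -- φ is ν-integrable
  have hexp1 : Integrable (fun x => Real.exp (φ x)) μ := by
    simpa using hexp 1
  have hexpm1 : Integrable (fun x => Real.exp (-φ x)) μ := by
    simpa [neg_mul, one_mul] using hexp (-1)
  have hφν : Integrable φ ν := integrable_of_finite_llr hφ hexp1 hexpm1 hνμ hνint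
  -- φ is G-integrable
  have hφG : Integrable φ G := by
    rw [← integrable_rnDeriv_smul_iff hGμ]
    have hrd := rnDeriv_tilted_left_self (μ := μ) (f := f) (Real.aemeasurable_of_aemeasurable_exp hexpf.1.aemeasurable)
    have : (fun x => (G.rnDeriv μ x).toReal • φ x) =ᵐ[μ]
        fun x => (Real.exp (f x) / Z) * φ x := by
      filter_upwards [hrd] with x hx
      rw [hG, hx, smul_eq_mul, ENNReal.toReal_ofReal (by positivity)]
    refine (Integrable.congr ?_ this.symm)
    have hbound : Integrable (fun x =>
        (Real.exp ((mstar + 1) * φ x) + Real.exp ((mstar - 1) * φ x)) / Z) μ :=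
      ((hexp (mstar + 1)).add (hexp (mstar - 1))).div_const Z
    refine hbound.mono' ?_ ?_
    · exact ((hexpf.1.aemeasurable.div_const Z).mul hφ.aemeasurable).aestronglyMeasurable
    · refine Filter.Eventually.of_forall fun x => ?_
      have habs : |φ x| ≤ Real.exp (φ x) + Real.exp (-φ x) := by
        rcases abs_cases (φ x) with ⟨h, _⟩ | ⟨h, _⟩ <;> rw [h] <;>
          [linarith [Real.add_one_le_exp (φ x), Real.exp_pos (-φ x)];
           linarith [Real.add_one_le_exp (-φ x), Real.exp_pos (φ x)]]
      have hep : (0:ℝ) < Real.exp (f x) := Real.exp_pos _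
      have h1 : Real.exp (f x) * Real.exp (φ x) = Real.exp ((mstar + 1) * φ x) := by
        rw [← Real.exp_add, hf]; ring_nf
      have h2 : Real.exp (f x) * Real.exp (-φ x) = Real.exp ((mstar - 1) * φ x) := by
        rw [← Real.exp_add, hf]; ring_nf
      have : ‖Real.exp (f x) / Z * φ x‖ = Real.exp (f x) / Z * |φ x| := by
        rw [Real.norm_eq_abs, abs_mul, abs_of_nonneg (by positivity)]
      rw [this]
      rw [div_mul_eq_mul_div, div_le_div_iff_of_pos_right hZpos]
      calc Real.exp (f x) * |φ x| ≤ Real.exp (f x) * (Real.exp (φ x) + Real.exp (-φ x)) :=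
            mul_le_mul_of_nonneg_left habs hep.le
        _ = Real.exp ((mstar + 1) * φ x) + Real.exp ((mstar - 1) * φ x) := by
            rw [mul_add, h1, h2]
  -- llr G μ
  have hllrG : llr G μ =ᵐ[G] fun x => f x - Real.log Z := by
    have := log_rnDeriv_tilted_left_self (μ := μ) (f := f) hexpf
    exact hGμ.ae_le this
  have hllrGint : Integrable (llr G μ) G := by
    refine (Integrable.congr ?_ hllrG.symm)
    exact ((hφG.const_mul mstar).sub (integrable_const _))
  have hintHG : ∫ x, llr G μ x ∂G = mstar * ∫ x, φ x ∂G - Real.log Z := by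
    rw [integral_congr_ae hllrG,
      integral_sub (hφG.const_mul mstar) (integrable_const _)]
    simp [hf, integral_const_mul mstar]
  have hEG : relEntropy G μ = ((∫ x, llr G μ x ∂G : ℝ) : EReal) := by
    rw [relEntropy, if_pos ⟨hGμ, hllrGint⟩]
  set HG : ℝ := ∫ x, llr G μ x ∂G with hHG
  -- llr ν G
  have hνG : ν ≪ G := hνμ.trans (absolutelyContinuous_tilted hexpf)
  have hνGint : Integrable (llr ν G) ν :=
    integrable_llr_tilted_right hνμ (hφν.const_mul mstar) hνint hexpf
  have hK : ∫ x, llr ν G x ∂ν = Hν - mstar * ∫ x, φ x ∂ν + Real.log Z := by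
    rw [hG, integral_llr_tilted_right hνμ (hφν.const_mul mstar) hexpf hνint]
    simp [hf, integral_const_mul mstar, hHν, hZ]
  set K : ℝ := ∫ x, llr ν G x ∂ν with hKdef
  obtain ⟨hKpos, hKeq⟩ := gibbs_ineq hνG hνGint
  -- nonnegativity of the (1 - mstar) term
  have hνle : Hν ≤ Real.log 2 := by
    rw [hEν] at hν
    exact_mod_cast hν
  have hterm : 0 ≤ (1 - mstar) * (HG - Hν) := by
    rcases hcase with h1 | h2
    · rw [h1]; simp
    · have hHG2 : HG = Real.log 2 := by
        rw [hEG] at h2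
        exact_mod_cast h2
      have : 0 ≤ 1 - mstar := by linarith [hmem.2]
      exact mul_nonneg this (by rw [hHG2]; linarith)
  -- key identity
  have hmB : mstar * ∫ x, φ x ∂G = HG + Real.log Z := by
    rw [hintHG]; ring
  have hmA : mstar * ∫ x, φ x ∂ν = Hν + Real.log Z - K := by
    rw [hK]; ring
  have key : mstar * ((∫ x, φ x ∂G - HG) - (∫ x, φ x ∂ν - Hν)) =
      K + (1 - mstar) * (HG - Hν) := by
    linear_combination hmB - hmA
  have hmpos : 0 < mstar := hmem.1
  have hEνtoReal : (relEntropy ν μ).toReal = Hν := by rw [hEν]; simp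
  have hEGtoReal : (relEntropy G μ).toReal = HG := by rw [hEG]; simp
  rw [hEνtoReal, hEGtoReal]
  constructor
  · nlinarith [hKpos, hterm, key]
  · constructor
    · intro heq
      have h0 : K + (1 - mstar) * (HG - Hν) = 0 := by
        rw [← key, heq]; ring
      have hK0 : K = 0 := by linarith
      exact hKeq hK0
    · intro heq
      have hHeq : Hν = HG := by rw [hHν, hHG, heq]
      rw [heq, hHeq]
end

section
/- If Γ'(1) − Γ(1) ≤ log 2, then inf_{m ∈ (0,1]} [ (log 2)/m + Γ(m)/m − log 2 ] = Γ(1), and this equals sup{∫φdν − H(ν|μ) : H(ν|μ) ≤ log 2}. -/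
open MeasureTheory ProbabilityTheory Filter Set


open MeasureTheory ProbabilityTheory Filter Set Real

lemma my_abs_le (y : ℝ) : |y| ≤ Real.exp y + Real.exp (-y) := by
  rcases le_total 0 y with h | h
  · rw [abs_of_nonneg h]
    have := Real.add_one_le_exp y
    have := Real.exp_pos (-y)
    linarith
  · rw [abs_of_nonpos h]
    have := Real.add_one_le_exp (-y)
    have := Real.exp_pos y
    linarith

lemma my_jensen {S : Type*} [MeasurableSpace S] (ν : Measure S) [IsProbabilityMeasure ν]
    (g : S → ℝ) (hg : Integrable g ν) (hexpg : Integrable (fun x => Real.exp (g x)) ν) :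
    ∫ x, g x ∂ν ≤ Real.log (∫ x, Real.exp (g x) ∂ν) := by
  set c := ∫ x, g x ∂ν with hc
  have h1 : Real.exp c ≤ ∫ x, Real.exp (g x) ∂ν := by
    have heq : Real.exp c = ∫ x, Real.exp c * (g x - c + 1) ∂ν := by
      have hfun : (fun x => Real.exp c * (g x - c + 1))
          = fun x => Real.exp c * g x + Real.exp c * (1 - c) := by funext x; ring
      rw [hfun, integral_add (hg.const_mul _) (integrable_const _), integral_const_mul,
        integral_const]
      simp [measure_univ]
      ring
    rw [heq]
    refine integral_mono (((hg.sub (integrable_const c)).add (integrable_const 1)).const_mul _)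
      hexpg fun x => ?_
    have h2 : g x - c + 1 ≤ Real.exp (g x - c) := by
      have := Real.add_one_le_exp (g x - c); linarith
    calc Real.exp c * (g x - c + 1) ≤ Real.exp c * Real.exp (g x - c) :=
          mul_le_mul_of_nonneg_left h2 (Real.exp_pos c).le
      _ = Real.exp (g x) := by rw [← Real.exp_add]; ring_nf
  calc c = Real.log (Real.exp c) := (Real.log_exp c).symm
    _ ≤ Real.log (∫ x, Real.exp (g x) ∂ν) := Real.log_le_log (Real.exp_pos c) h1

lemma my_integrable_of_llr {S : Type*} [MeasurableSpace S] {μ ν : Measure S}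
    [IsProbabilityMeasure μ] [IsProbabilityMeasure ν] {φ : S → ℝ} (hφ : Measurable φ)
    (hexp : ∀ l : ℝ, Integrable (fun x => Real.exp (l * φ x)) μ)
    (hac : ν ≪ μ) (hint : Integrable (llr ν μ) ν) : Integrable φ ν := by
  set A : Set S := {x | llr ν μ x ≤ |φ x|} with hA_def
  have hA : MeasurableSet A := measurableSet_le (measurable_llr ν μ) hφ.abs
  have h1 : Integrable (Aᶜ.indicator φ) ν := by
    refine hint.mono ((hφ.indicator hA.compl).aestronglyMeasurable) (ae_of_all _ fun x => ?_)
    by_cases hx : x ∈ Aᶜ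
    · rw [Set.indicator_of_mem hx]
      have hlt : |φ x| < llr ν μ x := not_le.mp hx
      rw [Real.norm_eq_abs, Real.norm_eq_abs]
      exact le_trans hlt.le (le_abs_self _)
    · rw [Set.indicator_of_notMem hx]
      simp [norm_nonneg]
  have h2 : Integrable (A.indicator φ) ν := by
    rw [← MeasureTheory.integrable_rnDeriv_smul_iff hac]
    refine ((hexp 2).add (hexp (-2))).mono ?_ (ae_of_all _ fun x => ?_)
    · exact ((Measure.measurable_rnDeriv ν μ).ennreal_toReal.smul
        (hφ.indicator hA)).aestronglyMeasurable
    · have hR : 0 ≤ Real.exp (2 * φ x) + Real.exp (-2 * φ x) :=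
        by positivity
      simp only [Pi.add_apply, Real.norm_eq_abs]
      rw [abs_of_nonneg hR, smul_eq_mul, abs_mul, abs_of_nonneg ENNReal.toReal_nonneg]
      by_cases hxA : x ∈ A
      · rw [Set.indicator_of_mem hxA]
        set ρ := (ν.rnDeriv μ x).toReal with hρ
        rcases eq_or_lt_of_le (ENNReal.toReal_nonneg : (0:ℝ) ≤ ρ) with h0 | hpos
        · rw [hρ, ← h0, zero_mul]; exact hR
        · have hlog : Real.log ρ ≤ |φ x| := hxA
          have hρle : ρ ≤ Real.exp |φ x| := (Real.log_le_iff_le_exp hpos).mp hlog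
          have habs : |φ x| ≤ Real.exp |φ x| := by
            have := Real.add_one_le_exp |φ x|; linarith
          have : ρ * |φ x| ≤ Real.exp |φ x| * Real.exp |φ x| :=
            mul_le_mul hρle habs (abs_nonneg _) (Real.exp_pos _).le
          rw [← Real.exp_add] at this
          refine this.trans ?_
          rcases le_total 0 (φ x) with hs | hs
          · rw [abs_of_nonneg hs]
            have := Real.exp_pos (-2 * φ x)
            have : Real.exp (φ x + φ x) ≤ Real.exp (2 * φ x) := by
              apply Real.exp_le_exp.mpr; linarith
            linarith [Real.exp_pos (-2 * φ x)]
          · rw [abs_of_nonpos hs]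
            have : Real.exp (-φ x + -φ x) ≤ Real.exp (-2 * φ x) := by
              apply Real.exp_le_exp.mpr; linarith
            linarith [Real.exp_pos (2 * φ x)]
      · rw [Set.indicator_of_notMem hxA]
        simpa using hR
  have hsum := h2.add h1
  refine hsum.congr (ae_of_all _ fun x => ?_)
  exact congrFun (Set.indicator_self_add_compl A φ) x

lemma my_gibbs {S : Type*} [MeasurableSpace S] {μ ν : Measure S}
    [IsProbabilityMeasure μ] [IsProbabilityMeasure ν] {φ : S → ℝ} (hφ : Measurable φ)
    (hexp : ∀ l : ℝ, Integrable (fun x => Real.exp (l * φ x)) μ)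
    (hac : ν ≪ μ) (hint : Integrable (llr ν μ) ν) :
    ∫ x, φ x ∂ν - ∫ x, llr ν μ x ∂ν ≤ Real.log (∫ x, Real.exp (φ x) ∂μ) := by
  have hexp1 : Integrable (fun x => Real.exp (φ x)) μ := by simpa using hexp 1
  have hφν : Integrable φ ν := my_integrable_of_llr hφ hexp hac hint
  have hgint : Integrable (fun x => φ x - llr ν μ x) ν := hφν.sub hint
  have hpt : ∀ x, (ν.rnDeriv μ x).toReal • Real.exp (φ x - llr ν μ x) ≤ Real.exp (φ x) := by
    intro x
    rcases eq_or_lt_of_le (ENNReal.toReal_nonneg : (0:ℝ) ≤ (ν.rnDeriv μ x).toReal) with h0 | hpos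
    · rw [smul_eq_mul, ← h0, zero_mul]; exact (Real.exp_pos _).le
    · rw [smul_eq_mul, llr, Real.exp_sub, Real.exp_log hpos]
      rw [mul_comm, div_mul_cancel₀ _ hpos.ne']
  have hEaux : Integrable (fun x => (ν.rnDeriv μ x).toReal • Real.exp (φ x - llr ν μ x)) μ := by
    refine hexp1.mono ?_ (ae_of_all _ fun x => ?_)
    · exact ((Measure.measurable_rnDeriv ν μ).ennreal_toReal.smul
        ((hφ.sub (measurable_llr ν μ)).exp)).aestronglyMeasurable
    · rw [Real.norm_eq_abs, Real.norm_eq_abs, abs_of_nonneg (Real.exp_pos _).le,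
        abs_of_nonneg (by rw [smul_eq_mul]; positivity)]
      exact hpt x
  have hEν : Integrable (fun x => Real.exp (φ x - llr ν μ x)) ν :=
    (MeasureTheory.integrable_rnDeriv_smul_iff hac).mp hEaux
  have hle : ∫ x, Real.exp (φ x - llr ν μ x) ∂ν ≤ ∫ x, Real.exp (φ x) ∂μ := by
    rw [← MeasureTheory.integral_rnDeriv_smul hac]
    exact integral_mono hEaux hexp1 hpt
  have hJ := my_jensen ν _ hgint hEν
  rw [integral_sub hφν hint] at hJ
  refine hJ.trans ?_
  exact Real.log_le_log (integral_exp_pos hEν) hle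

lemma my_hasDerivAt {S : Type*} [MeasurableSpace S] (μ : Measure S) [IsProbabilityMeasure μ]
    {φ : S → ℝ} (hφ : Measurable φ)
    (hexp : ∀ l : ℝ, Integrable (fun x => Real.exp (l * φ x)) μ) :
    HasDerivAt (fun t => ∫ x, Real.exp (t * φ x) ∂μ) (∫ x, φ x * Real.exp (φ x) ∂μ) 1 := by
  have key := hasDerivAt_integral_of_dominated_loc_of_deriv_le
    (F := fun t x => Real.exp (t * φ x)) (F' := fun t x => φ x * Real.exp (t * φ x))
    (x₀ := (1:ℝ)) (s := Metric.ball (1:ℝ) 1)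
    (bound := fun x => (Real.exp (φ x) + Real.exp (-φ x)) * (Real.exp (2 * φ x) + 1))
    (Metric.ball_mem_nhds (1:ℝ) one_pos)
    (Eventually.of_forall fun t => (measurable_exp.comp (hφ.const_mul t)).aestronglyMeasurable)
    (hexp 1)
    ((hφ.mul (measurable_exp.comp (hφ.const_mul 1))).aestronglyMeasurable)
    (ae_of_all _ fun x t ht => ?_) ?_ (ae_of_all _ fun x t _ => ?_)
  · have h2 := key.2
    have heq : (fun x => φ x * Real.exp (1 * φ x)) = fun x => φ x * Real.exp (φ x) := by
      funext x; rw [one_mul]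
    rwa [heq] at h2
  · -- the bound
    rw [Metric.mem_ball, Real.dist_eq, abs_sub_lt_iff] at ht
    have ht0 : 0 < t := by linarith
    have ht2 : t < 2 := by linarith
    rw [Real.norm_eq_abs, abs_mul, abs_of_nonneg (Real.exp_pos _).le]
    have h1 : |φ x| ≤ Real.exp (φ x) + Real.exp (-φ x) := my_abs_le (φ x)
    have h2 : Real.exp (t * φ x) ≤ Real.exp (2 * φ x) + 1 := by
      rcases le_total 0 (φ x) with hs | hs
      · have : Real.exp (t * φ x) ≤ Real.exp (2 * φ x) :=
          Real.exp_le_exp.mpr (by nlinarith)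
        linarith
      · have : Real.exp (t * φ x) ≤ 1 := by
          rw [← Real.exp_zero]; exact Real.exp_le_exp.mpr (by nlinarith)
        linarith [Real.exp_pos (2 * φ x)]
    exact mul_le_mul h1 h2 (Real.exp_pos _).le (by positivity)
  · -- integrability of the bound
    have heq : (fun x => (Real.exp (φ x) + Real.exp (-φ x)) * (Real.exp (2 * φ x) + 1))
        = fun x => Real.exp (3 * φ x) + Real.exp (1 * φ x)
          + (Real.exp (1 * φ x) + Real.exp (-1 * φ x)) := by
      funext x
      have e3 : Real.exp (3 * φ x) = Real.exp (φ x) * Real.exp (2 * φ x) := by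
        rw [← Real.exp_add]; ring_nf
      have e1 : Real.exp ((1:ℝ) * φ x) = Real.exp (φ x) := by rw [one_mul]
      have em : Real.exp ((-1:ℝ) * φ x) = Real.exp (-φ x) := by norm_num
      have e1' : Real.exp (-φ x) * Real.exp (2 * φ x) = Real.exp (φ x) := by
        rw [← Real.exp_add]; ring_nf
      rw [e3, e1, em]
      nlinarith [e1']
    rw [heq]
    exact ((hexp 3).add (hexp 1)).add ((hexp 1).add (hexp (-1)))
  · -- pointwise derivative
    have h := (hasDerivAt_mul_const (φ x) : HasDerivAt (fun t : ℝ => t * φ x) (φ x) t).exp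
    simpa [mul_comm] using h


theorem parisi_equals_gibbs_highTemperature
    {S : Type*} [MeasurableSpace S] (μ : Measure S) [IsProbabilityMeasure μ]
    (φ : S → ℝ) (hφ : Measurable φ)
    (hexp : ∀ l : ℝ, Integrable (fun x => Real.exp (l * φ x)) μ)
    (Γ : ℝ → ℝ) (hΓ : Γ = fun m => Real.log (∫ x, Real.exp (m * φ x) ∂μ))
    (hhigh : deriv Γ 1 - Γ 1 ≤ Real.log 2) :
    sInf ((fun m => Real.log 2 / m + Γ m / m - Real.log 2) '' Ioc (0 : ℝ) 1) = Γ 1 ∧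
    Γ 1 = sSup {r : ℝ | ∃ ν : Measure S, IsProbabilityMeasure ν ∧
      relEntropy ν μ ≤ (Real.log 2 : EReal) ∧
      r = ∫ x, φ x ∂ν - (relEntropy ν μ).toReal} := by
  have hexp1 : Integrable (fun x => Real.exp (φ x)) μ := by simpa using hexp 1
  have hMpos : ∀ m : ℝ, 0 < ∫ x, Real.exp (m * φ x) ∂μ := fun m => integral_exp_pos (hexp m)
  have hM1pos : 0 < ∫ x, Real.exp (φ x) ∂μ := integral_exp_pos hexp1
  set M1 : ℝ := ∫ x, Real.exp (φ x) ∂μ with hM1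
  have hΓ1 : Γ 1 = Real.log M1 := by rw [hΓ]; simp only [one_mul, hM1]
  set ν : Measure S := μ.tilted φ with hν
  haveI hνP : IsProbabilityMeasure ν := isProbabilityMeasure_tilted hexp1
  have hacν : ν ≪ μ := tilted_absolutelyContinuous μ φ
  have hrn : (fun x => (ν.rnDeriv μ x).toReal) =ᵐ[μ] fun x => Real.exp (φ x) / M1 := by
    filter_upwards [rnDeriv_tilted_left_self (μ := μ) hφ.aemeasurable] with x hx
    rw [hν]
    rw [hx, ENNReal.toReal_ofReal (by positivity)]
  have htilt : ∀ g : S → ℝ, Integrable (fun x => Real.exp (φ x) * g x) μ →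
      Integrable g ν := by
    intro g hg
    rw [← MeasureTheory.integrable_rnDeriv_smul_iff hacν]
    refine (hg.div_const M1).congr ?_
    filter_upwards [hrn] with x hx
    rw [smul_eq_mul, hx]; ring
  have hφν : Integrable φ ν := by
    refine htilt φ ?_
    refine ((hexp 2).add (integrable_const 1)).mono
      ((measurable_exp.comp hφ).mul hφ).aestronglyMeasurable (ae_of_all _ fun x => ?_)
    simp only [Pi.add_apply, Real.norm_eq_abs]
    rw [abs_mul, abs_of_nonneg (Real.exp_pos _).le]
    have h1 : |φ x| ≤ Real.exp (φ x) + Real.exp (-φ x) := my_abs_le (φ x)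
    have h2 : Real.exp (φ x) * |φ x| ≤ Real.exp (φ x) * (Real.exp (φ x) + Real.exp (-φ x)) :=
      mul_le_mul_of_nonneg_left h1 (Real.exp_pos _).le
    have he : Real.exp (φ x) * (Real.exp (φ x) + Real.exp (-φ x))
        = Real.exp (2 * φ x) + 1 := by
      rw [mul_add, ← Real.exp_add, ← Real.exp_add]
      norm_num
      ring_nf
    rw [he] at h2
    have : (0:ℝ) ≤ Real.exp (2 * φ x) + 1 := by positivity
    rw [abs_of_nonneg this]
    exact h2
  set D : ℝ := ∫ x, φ x ∂ν with hDdef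
  have hM' := my_hasDerivAt μ hφ hexp
  have hΓ' : HasDerivAt Γ ((∫ x, φ x * Real.exp (φ x) ∂μ) / (∫ x, Real.exp (1 * φ x) ∂μ)) 1 := by
    rw [hΓ]; exact hM'.log (hMpos 1).ne'
  have hone : (∫ x, Real.exp (1 * φ x) ∂μ) = M1 := by simp only [one_mul, hM1]
  have hDeq : deriv Γ 1 = D := by
    rw [hΓ'.deriv, hone, hDdef, hν, integral_tilted, ← hM1, ← integral_div]
    refine integral_congr_ae (ae_of_all _ fun x => ?_)
    simp only [smul_eq_mul]; ring
  have hhigh' : D - Real.log M1 ≤ Real.log 2 := by rw [← hDeq, ← hΓ1]; exact hhigh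
  have hkey : ∀ m : ℝ, (m - 1) * D ≤ Γ m - Γ 1 := by
    intro m
    have hint1 : Integrable (fun x => (m - 1) * φ x) ν := hφν.const_mul _
    have hint2 : Integrable (fun x => Real.exp ((m - 1) * φ x)) ν := by
      refine htilt _ ?_
      refine (hexp m).congr (ae_of_all _ fun x => ?_)
      simp only [← Real.exp_add]
      congr 1; ring
    have hJ := my_jensen ν _ hint1 hint2
    have hEq : ∫ x, Real.exp ((m - 1) * φ x) ∂ν = (∫ x, Real.exp (m * φ x) ∂μ) / M1 := by
      rw [hν, integral_exp_tilted, ← hM1]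
      congr 1
      refine integral_congr_ae (ae_of_all _ fun x => ?_)
      simp only [Pi.add_apply]
      congr 1; ring
    rw [integral_const_mul, hEq, Real.log_div (hMpos m).ne' hM1pos.ne', ← hDdef] at hJ
    simp only [hΓ, one_mul]
    rw [← hM1]
    exact hJ
  constructor
  · -- sInf part
    have hmem : Γ 1 ∈ (fun m => Real.log 2 / m + Γ m / m - Real.log 2) '' Ioc (0:ℝ) 1 :=
      ⟨1, ⟨one_pos, le_refl 1⟩, by simp⟩
    have hlb : ∀ r ∈ (fun m => Real.log 2 / m + Γ m / m - Real.log 2) '' Ioc (0:ℝ) 1,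
        Γ 1 ≤ r := by
      rintro r ⟨m, ⟨hm0, hm1⟩, rfl⟩
      have h1 := hkey m
      have hD2 : D ≤ Γ 1 + Real.log 2 := by rw [hΓ1]; linarith
      have hprod : 0 ≤ (1 - m) * ((Γ 1 + Real.log 2) - D) :=
        mul_nonneg (by linarith) (by linarith)
      simp only
      rw [← add_div, le_sub_iff_add_le, le_div_iff₀ hm0]
      nlinarith [h1, hprod]
    exact le_antisymm (csInf_le ⟨Γ 1, fun r hr => hlb r hr⟩ hmem) (le_csInf ⟨_, hmem⟩ hlb)
  · -- sSup part
    have hllr0 : llr μ μ =ᵐ[μ] fun _ => (0:ℝ) := by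
      filter_upwards [Measure.rnDeriv_self μ] with x hx
      rw [llr, hx]; simp
    have hllrν : llr ν μ =ᵐ[ν] fun x => φ x - Real.log M1 := by
      refine hacν.ae_le ?_
      filter_upwards [llr_tilted_left Measure.AbsolutelyContinuous.rfl hexp1 hφ.aemeasurable,
        hllr0] with x hx1 hx2
      rw [hν, hx1, hx2, ← hM1, add_zero]
    have hllr_int : Integrable (llr ν μ) ν :=
      (hφν.sub (integrable_const _)).congr hllrν.symm
    have hHval : ∫ x, llr ν μ x ∂ν = D - Real.log M1 := by
      rw [integral_congr_ae hllrν, integral_sub hφν (integrable_const _), integral_const]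
      simp [measure_univ, hDdef]
    have hrel : relEntropy ν μ = ((D - Real.log M1 : ℝ) : EReal) := by
      simp only [relEntropy]
      rw [if_pos ⟨hacν, hllr_int⟩, hHval]
    have hmem : Γ 1 ∈ {r : ℝ | ∃ ν' : Measure S, IsProbabilityMeasure ν' ∧
        relEntropy ν' μ ≤ (Real.log 2 : EReal) ∧
        r = ∫ x, φ x ∂ν' - (relEntropy ν' μ).toReal} := by
      refine ⟨ν, hνP, ?_, ?_⟩
      · rw [hrel]; exact_mod_cast hhigh'
      · rw [hrel, EReal.toReal_coe, ← hDdef, hΓ1]; ring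
    have hub : ∀ r ∈ {r : ℝ | ∃ ν' : Measure S, IsProbabilityMeasure ν' ∧
        relEntropy ν' μ ≤ (Real.log 2 : EReal) ∧
        r = ∫ x, φ x ∂ν' - (relEntropy ν' μ).toReal}, r ≤ Γ 1 := by
      rintro r ⟨ν', hν'P, hent, rfl⟩
      haveI := hν'P
      by_cases hc : ν' ≪ μ ∧ Integrable (llr ν' μ) ν'
      · have hrel' : relEntropy ν' μ = ((∫ x, llr ν' μ x ∂ν' : ℝ) : EReal) := by
          simp only [relEntropy]; rw [if_pos hc]
        rw [hrel', EReal.toReal_coe, hΓ1]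
        exact my_gibbs hφ hexp hc.1 hc.2
      · exfalso
        simp only [relEntropy, if_neg hc] at hent
        exact (EReal.coe_lt_top (Real.log 2)).not_ge hent
    exact le_antisymm (le_csSup ⟨Γ 1, fun r hr => hub r hr⟩ hmem) (csSup_le ⟨_, hmem⟩ hub)
end

section
/- Let g be a standard Gaussian and define H(β) = e^{−β²/2} E[cosh(βg) log cosh(βg)] for β ≥ 0. Then H'(β) = β e^{−β²/2} ( E[cosh(βg)] + E[sinh²(βg)/cosh(βg)] ), which is strictly positive for β > 0. -/
open MeasureTheory ProbabilityTheory Real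
open scoped ENNReal NNReal

noncomputable def phi (x : ℝ) : ℝ := (Real.sqrt (2*π))⁻¹ * rexp (-x^2/2)

lemma phi_nonneg (x : ℝ) : 0 ≤ phi x := by unfold phi; positivity

lemma phi_eq : gaussianPDFReal 0 1 = phi := by
  ext x; simp [gaussianPDFReal, phi]

lemma integral_gauss (f : ℝ → ℝ) :
    ∫ x, f x ∂(gaussianReal 0 1) = ∫ x, phi x * f x := by
  rw [gaussianReal_of_var_ne_zero 0 one_ne_zero]
  have h : gaussianPDF 0 1 = fun x => ((Real.toNNReal (phi x) : ℝ≥0) : ℝ≥0∞) := by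
    ext x; rw [gaussianPDF, phi_eq]; rfl
  rw [h, integral_withDensity_eq_integral_smul (by unfold phi; fun_prop)]
  congr 1; ext x
  simp [NNReal.smul_def, Real.coe_toNNReal _ (phi_nonneg x)]

lemma integrable_expC (c : ℝ) : Integrable (fun x : ℝ => rexp (c*x - x^2/2)) := by
  have h : (fun x : ℝ => rexp (c*x - x^2/2))
      = fun x => rexp (c^2/2) * rexp (-(1/2 : ℝ) * (x - c)^2) := by
    ext x; rw [← Real.exp_add]; ring_nf
  rw [h]
  exact ((integrable_exp_neg_mul_sq (by norm_num : (0:ℝ) < 1/2)).comp_sub_right c).const_mul _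

lemma integrable_B (a : ℝ) : Integrable (fun x : ℝ => rexp (a*|x| - x^2/2)) := by
  refine ((integrable_expC a).add (integrable_expC (-a))).mono'
    (Real.continuous_exp.comp (by continuity)).aestronglyMeasurable ?_
  refine ae_of_all _ fun x => ?_
  rw [Real.norm_eq_abs, abs_of_nonneg (Real.exp_nonneg _)]
  rcases abs_cases x with ⟨h1, _⟩ | ⟨h1, _⟩
  · rw [h1]
    exact le_add_of_nonneg_right (Real.exp_nonneg _)
  · rw [h1, show a * -x = -a * x by ring]
    exact le_add_of_nonneg_left (Real.exp_nonneg _)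

lemma integrable_of_B_bound {g : ℝ → ℝ} (hg : AEStronglyMeasurable g volume) {C a : ℝ}
    (h : ∀ x, |g x| ≤ C * rexp (a*|x| - x^2/2)) : Integrable g :=
  ((integrable_B a).const_mul C).mono' hg (ae_of_all _ fun x => by
    simpa [Real.norm_eq_abs] using h x)

lemma B_le (a x : ℝ) : rexp (a*|x| - x^2/2) ≤ rexp (a^2) * rexp (-(x^2/4)) := by
  rw [← Real.exp_add]
  apply Real.exp_le_exp.2
  nlinarith [sq_nonneg (|x|/2 - a), sq_abs x]

lemma tendsto_B (a : ℝ) (l : Filter ℝ) (hl : Filter.Tendsto (fun x : ℝ => x^2) l Filter.atTop) :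
    Filter.Tendsto (fun x : ℝ => rexp (a*|x| - x^2/2)) l (nhds 0) := by
  have h1 : Filter.Tendsto (fun x : ℝ => -(x^2/4)) l Filter.atBot := by
    have := hl.const_mul_atTop_of_neg (show (-(1/4):ℝ) < 0 by norm_num)
    exact this.congr (fun x => by ring)
  have h2 : Filter.Tendsto (fun x : ℝ => rexp (a^2) * rexp (-(x^2/4))) l (nhds 0) := by
    rw [show (0:ℝ) = rexp (a^2) * 0 by ring]
    exact (Real.tendsto_exp_atBot.comp h1).const_mul _
  exact squeeze_zero (fun x => Real.exp_nonneg _) (fun x => B_le a x) h2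

lemma sq_tendsto_atTop : Filter.Tendsto (fun x : ℝ => x^2) Filter.atTop Filter.atTop :=
  Filter.tendsto_pow_atTop two_ne_zero

lemma sq_tendsto_atBot : Filter.Tendsto (fun x : ℝ => x^2) Filter.atBot Filter.atTop := by
  have := sq_tendsto_atTop.comp Filter.tendsto_neg_atBot_atTop
  exact this.congr (fun x => by simp [neg_pow])

lemma cosh_le_exp_abs (y : ℝ) : Real.cosh y ≤ rexp |y| := by
  rw [← Real.cosh_abs, Real.cosh_eq]
  have h1 : rexp (-|y|) ≤ rexp |y| := Real.exp_le_exp.2 (by linarith [abs_nonneg y])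
  linarith

lemma abs_sinh_le_exp_abs (y : ℝ) : |Real.sinh y| ≤ rexp |y| := by
  rw [Real.abs_sinh, Real.sinh_eq]
  have h1 : 0 < rexp (-|y|) := Real.exp_pos _
  have h2 : 0 < rexp |y| := Real.exp_pos _
  linarith

lemma L_nonneg (y : ℝ) : 0 ≤ Real.log (Real.cosh y) := Real.log_nonneg (Real.one_le_cosh y)

lemma L_le_abs (y : ℝ) : Real.log (Real.cosh y) ≤ |y| := by
  calc Real.log (Real.cosh y) ≤ Real.log (rexp |y|) :=
        Real.log_le_log (Real.cosh_pos y) (cosh_le_exp_abs y)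
    _ = |y| := Real.log_exp _

lemma sinh_sq_div_cosh_le (y : ℝ) : Real.sinh y ^ 2 / Real.cosh y ≤ Real.cosh y := by
  rw [div_le_iff₀ (Real.cosh_pos y)]
  nlinarith [Real.cosh_sq' y, Real.cosh_pos y]

lemma hasDerivAt_inner (x β : ℝ) :
    HasDerivAt (fun b => Real.cosh (b*x) * Real.log (Real.cosh (b*x)))
      (x * Real.sinh (β*x) * (Real.log (Real.cosh (β*x)) + 1)) β := by
  have h1 : HasDerivAt (fun b : ℝ => b*x) x β := by simpa using hasDerivAt_mul_const x
  have hc : HasDerivAt (fun b => Real.cosh (b*x)) (Real.sinh (β*x) * x) β :=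
    by have := (Real.hasDerivAt_cosh (β*x)).comp β h1; exact this
  have hl : HasDerivAt (fun b => Real.log (Real.cosh (b*x)))
      ((Real.cosh (β*x))⁻¹ * (Real.sinh (β*x) * x)) β :=
    by have := (Real.hasDerivAt_log (Real.cosh_pos (β*x)).ne').comp β hc; exact this
  have h : HasDerivAt (fun b => Real.cosh (b*x) * Real.log (Real.cosh (b*x))) _ β := hc.mul hl
  convert h using 1
  have hc0 := (Real.cosh_pos (β*x)).ne'
  field_simp

lemma hasDerivAt_phi (x : ℝ) : HasDerivAt phi (-x * phi x) x := by
  have h1 : HasDerivAt (fun y : ℝ => -y^2/2) (-x) x := by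
    have : HasDerivAt (fun y : ℝ => -y^2/2) _ x := ((hasDerivAt_pow 2 x).neg).div_const 2
    convert this using 1
    simp; ring
  have : HasDerivAt phi _ x := ((h1.exp).const_mul (Real.sqrt (2*π))⁻¹)
  convert this using 1
  unfold phi; ring

lemma hasDerivAt_G (β x : ℝ) :
    HasDerivAt (fun y => phi y * (Real.sinh (β*y) * (Real.log (Real.cosh (β*y)) + 1)))
      (phi x * (β * (Real.cosh (β*x) * (Real.log (Real.cosh (β*x)) + 1)
          + Real.sinh (β*x)^2 / Real.cosh (β*x))
        - x * (Real.sinh (β*x) * (Real.log (Real.cosh (β*x)) + 1)))) x := by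
  have h1 : HasDerivAt (fun y : ℝ => β*y) β x := by simpa using (hasDerivAt_id x).const_mul β
  have hs : HasDerivAt (fun y => Real.sinh (β*y)) (Real.cosh (β*x) * β) x :=
    (Real.hasDerivAt_sinh (β*x)).comp x h1
  have hc : HasDerivAt (fun y => Real.cosh (β*y)) (Real.sinh (β*x) * β) x :=
    (Real.hasDerivAt_cosh (β*x)).comp x h1
  have hl : HasDerivAt (fun y => Real.log (Real.cosh (β*y)) + 1)
      ((Real.cosh (β*x))⁻¹ * (Real.sinh (β*x) * β)) x :=
    by have := (((Real.hasDerivAt_log (Real.cosh_pos (β*x)).ne').comp x hc).add_const 1); exact this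
  have h : HasDerivAt (fun y => phi y * (Real.sinh (β*y) * (Real.log (Real.cosh (β*y)) + 1))) _ x :=
    (hasDerivAt_phi x).mul (hs.mul hl)
  convert h using 1
  have hc0 := (Real.cosh_pos (β*x)).ne'
  field_simp
  ring

lemma abs_le_exp_abs (x : ℝ) : |x| ≤ rexp |x| := by
  linarith [Real.add_one_le_exp |x|, abs_nonneg x]

lemma continuous_phi : Continuous phi := by unfold phi; continuity

lemma bound_sinh {b β x : ℝ} (hβ : |β| ≤ b) : |Real.sinh (β*x)| ≤ rexp (b*|x|) := by
  refine (abs_sinh_le_exp_abs _).trans (Real.exp_le_exp.2 ?_)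
  rw [abs_mul]
  exact mul_le_mul_of_nonneg_right hβ (abs_nonneg x)

lemma bound_cosh {b β x : ℝ} (hβ : |β| ≤ b) : Real.cosh (β*x) ≤ rexp (b*|x|) := by
  refine (cosh_le_exp_abs _).trans (Real.exp_le_exp.2 ?_)
  rw [abs_mul]
  exact mul_le_mul_of_nonneg_right hβ (abs_nonneg x)

lemma bound_L {b β x : ℝ} (hβ : |β| ≤ b) : Real.log (Real.cosh (β*x)) ≤ b*|x| := by
  refine (L_le_abs _).trans ?_
  rw [abs_mul]
  exact mul_le_mul_of_nonneg_right hβ (abs_nonneg x)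

lemma bound_L1 {b β x : ℝ} (hβ : |β| ≤ b) :
    Real.log (Real.cosh (β*x)) + 1 ≤ (1+b) * rexp |x| := by
  have hb : 0 ≤ b := (abs_nonneg β).trans hβ
  have h1 : (1:ℝ) ≤ rexp |x| := by
    rw [← Real.exp_zero]; exact Real.exp_le_exp.2 (abs_nonneg x)
  have h2 : b * |x| ≤ b * rexp |x| := mul_le_mul_of_nonneg_left (abs_le_exp_abs x) hb
  have := bound_L (x := x) hβ
  nlinarith

/-- master bound for the β-derivative integrand -/
lemma bound_main {b β x : ℝ} (hβ : |β| ≤ b) :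
    |x * Real.sinh (β*x) * (Real.log (Real.cosh (β*x)) + 1)| ≤ (2+b) * rexp ((b+2)*|x|) := by
  have hb : 0 ≤ b := (abs_nonneg β).trans hβ
  have hL0 : 0 ≤ Real.log (Real.cosh (β*x)) + 1 := by linarith [L_nonneg (β*x)]
  rw [abs_mul, abs_mul, abs_of_nonneg hL0]
  calc |x| * |Real.sinh (β*x)| * (Real.log (Real.cosh (β*x)) + 1)
      ≤ rexp |x| * rexp (b*|x|) * ((1+b) * rexp |x|) := by
        refine mul_le_mul (mul_le_mul (abs_le_exp_abs x) (bound_sinh hβ)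
          (abs_nonneg _) (Real.exp_nonneg _)) (bound_L1 hβ) hL0 (by positivity)
    _ = (1+b) * rexp ((b+2)*|x|) := by
        rw [show (b+2)*|x| = |x| + b*|x| + |x| by ring, Real.exp_add, Real.exp_add]; ring
    _ ≤ (2+b) * rexp ((b+2)*|x|) := by
        have := Real.exp_nonneg ((b+2)*|x|); nlinarith

lemma bound_coshL {b β x : ℝ} (hβ : |β| ≤ b) :
    |Real.cosh (β*x) * Real.log (Real.cosh (β*x))| ≤ (2+b) * rexp ((b+2)*|x|) := by
  have hb : 0 ≤ b := (abs_nonneg β).trans hβ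
  rw [abs_mul, abs_of_nonneg (Real.cosh_pos _).le, abs_of_nonneg (L_nonneg _)]
  have h1 : (1:ℝ) ≤ rexp ((2:ℝ)*|x|) := by
    rw [← Real.exp_zero]; exact Real.exp_le_exp.2 (by positivity)
  calc Real.cosh (β*x) * Real.log (Real.cosh (β*x))
      ≤ rexp (b*|x|) * (b*|x|) := by
        refine mul_le_mul (bound_cosh hβ) (bound_L hβ) (L_nonneg _) (Real.exp_nonneg _)
    _ ≤ rexp (b*|x|) * (b * rexp |x|) := by
        refine mul_le_mul_of_nonneg_left
          (mul_le_mul_of_nonneg_left (abs_le_exp_abs x) hb) (Real.exp_nonneg _)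
    _ = b * rexp ((b+1)*|x|) := by
        rw [show (b+1)*|x| = b*|x| + |x| by ring, Real.exp_add]; ring
    _ ≤ (2+b) * rexp ((b+2)*|x|) := by
        refine mul_le_mul (by linarith) (Real.exp_le_exp.2 ?_) (Real.exp_nonneg _) (by linarith)
        nlinarith [abs_nonneg x]

lemma bound_coshL1 {b β x : ℝ} (hβ : |β| ≤ b) :
    |Real.cosh (β*x) * (Real.log (Real.cosh (β*x)) + 1) + Real.sinh (β*x)^2 / Real.cosh (β*x)|
      ≤ (2+b+2) * rexp ((b+2)*|x|) := by
  have hb : 0 ≤ b := (abs_nonneg β).trans hβ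
  have hL0 : 0 ≤ Real.log (Real.cosh (β*x)) + 1 := by linarith [L_nonneg (β*x)]
  have h0 : 0 ≤ Real.sinh (β*x)^2 / Real.cosh (β*x) := by positivity
  rw [abs_of_nonneg (by positivity)]
  have h1 : Real.sinh (β*x)^2 / Real.cosh (β*x) ≤ rexp ((b+2)*|x|) := by
    refine (sinh_sq_div_cosh_le _).trans ((bound_cosh hβ).trans (Real.exp_le_exp.2 ?_))
    nlinarith [abs_nonneg x]
  have h2 : Real.cosh (β*x) * (Real.log (Real.cosh (β*x)) + 1) ≤ (1+b) * rexp ((b+2)*|x|) := by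
    calc Real.cosh (β*x) * (Real.log (Real.cosh (β*x)) + 1)
        ≤ rexp (b*|x|) * ((1+b) * rexp |x|) :=
          mul_le_mul (bound_cosh hβ) (bound_L1 hβ) hL0 (Real.exp_nonneg _)
      _ = (1+b) * rexp ((b+1)*|x|) := by
          rw [show (b+1)*|x| = b*|x| + |x| by ring, Real.exp_add]; ring
      _ ≤ (1+b) * rexp ((b+2)*|x|) := by
          refine mul_le_mul_of_nonneg_left (Real.exp_le_exp.2 ?_) (by linarith)
          nlinarith [abs_nonneg x]
  nlinarith [Real.exp_nonneg ((b+2)*|x|)]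

lemma integrable_phi_mul {h : ℝ → ℝ} (hm : AEStronglyMeasurable (fun x => phi x * h x) volume)
    {C a : ℝ} (hh : ∀ x, |h x| ≤ C * rexp (a*|x|)) :
    Integrable (fun x => phi x * h x) := by
  refine integrable_of_B_bound hm (C := (Real.sqrt (2*π))⁻¹ * C) (a := a) fun x => ?_
  rw [abs_mul, abs_of_nonneg (phi_nonneg x)]
  unfold phi
  calc (Real.sqrt (2*π))⁻¹ * rexp (-x^2/2) * |h x|
      ≤ (Real.sqrt (2*π))⁻¹ * rexp (-x^2/2) * (C * rexp (a*|x|)) := by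
        refine mul_le_mul_of_nonneg_left (hh x) (by positivity)
    _ = (Real.sqrt (2*π))⁻¹ * C * rexp (a*|x| - x^2/2) := by
        rw [show a*|x| - x^2/2 = a*|x| + (-x^2/2) by ring, Real.exp_add]; ring

lemma cont_L (β : ℝ) : Continuous (fun x : ℝ => Real.log (Real.cosh (β*x))) :=
  Continuous.log (Real.continuous_cosh.comp (continuous_const.mul continuous_id))
    (fun x => (Real.cosh_pos _).ne')

lemma cont_coshb (β : ℝ) : Continuous (fun x : ℝ => Real.cosh (β*x)) :=
  Real.continuous_cosh.comp (continuous_const.mul continuous_id)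

lemma cont_sinhb (β : ℝ) : Continuous (fun x : ℝ => Real.sinh (β*x)) :=
  Real.continuous_sinh.comp (continuous_const.mul continuous_id)

lemma int_coshL (β : ℝ) :
    Integrable (fun x => phi x * (Real.cosh (β*x) * Real.log (Real.cosh (β*x)))) :=
  integrable_phi_mul
    (continuous_phi.mul ((cont_coshb β).mul (cont_L β))).aestronglyMeasurable
    (C := 2+|β|) (a := |β|+2) (fun x => by simpa using bound_coshL (le_refl |β|))

lemma int_cosh (β : ℝ) : Integrable (fun x => phi x * Real.cosh (β*x)) :=
  integrable_phi_mul (continuous_phi.mul (cont_coshb β)).aestronglyMeasurable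
    (C := 1) (a := |β|) (fun x => by
      rw [abs_of_nonneg (Real.cosh_pos _).le, one_mul]
      exact bound_cosh (le_refl |β|))

lemma int_sinhsq (β : ℝ) :
    Integrable (fun x => phi x * (Real.sinh (β*x)^2 / Real.cosh (β*x))) :=
  integrable_phi_mul
    (continuous_phi.mul (((cont_sinhb β).pow 2).div (cont_coshb β)
      (fun x => (Real.cosh_pos _).ne'))).aestronglyMeasurable
    (C := 1) (a := |β|) (fun x => by
      rw [abs_of_nonneg (by positivity), one_mul]
      exact (sinh_sq_div_cosh_le _).trans (bound_cosh (le_refl |β|)))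

lemma int_coshL1sq (β : ℝ) :
    Integrable (fun x => phi x * (Real.cosh (β*x) * (Real.log (Real.cosh (β*x)) + 1)
      + Real.sinh (β*x)^2 / Real.cosh (β*x))) :=
  integrable_phi_mul
    (continuous_phi.mul (((cont_coshb β).mul ((cont_L β).add continuous_const)).add
      (((cont_sinhb β).pow 2).div (cont_coshb β)
        (fun x => (Real.cosh_pos _).ne')))).aestronglyMeasurable
    (C := 2+|β|+2) (a := |β|+2) (fun x => by simpa using bound_coshL1 (le_refl |β|))

lemma int_xsinh (β : ℝ) :
    Integrable (fun x => phi x * (x * Real.sinh (β*x) * (Real.log (Real.cosh (β*x)) + 1))) :=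
  integrable_phi_mul
    (continuous_phi.mul ((continuous_id.mul (cont_sinhb β)).mul
      ((cont_L β).add continuous_const))).aestronglyMeasurable
    (C := 2+|β|) (a := |β|+2) (fun x => by simpa using bound_main (le_refl |β|))

lemma bound_sinhL1 {b β x : ℝ} (hβ : |β| ≤ b) :
    |Real.sinh (β*x) * (Real.log (Real.cosh (β*x)) + 1)| ≤ (1+b) * rexp ((b+1)*|x|) := by
  have hL0 : 0 ≤ Real.log (Real.cosh (β*x)) + 1 := by linarith [L_nonneg (β*x)]
  rw [abs_mul, abs_of_nonneg hL0]
  calc |Real.sinh (β*x)| * (Real.log (Real.cosh (β*x)) + 1)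
      ≤ rexp (b*|x|) * ((1+b) * rexp |x|) :=
        mul_le_mul (bound_sinh hβ) (bound_L1 hβ) hL0 (Real.exp_nonneg _)
    _ = (1+b) * rexp ((b+1)*|x|) := by
        rw [show (b+1)*|x| = b*|x| + |x| by ring, Real.exp_add]; ring

lemma ibp (β : ℝ) :
    ∫ x, phi x * (x * Real.sinh (β*x) * (Real.log (Real.cosh (β*x)) + 1))
      = β * ∫ x, phi x * (Real.cosh (β*x) * (Real.log (Real.cosh (β*x)) + 1)
          + Real.sinh (β*x)^2 / Real.cosh (β*x)) := by
  set G : ℝ → ℝ := fun y => phi y * (Real.sinh (β*y) * (Real.log (Real.cosh (β*y)) + 1)) with hG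
  let g' : ℝ → ℝ := fun x => phi x * (β * (Real.cosh (β*x) * (Real.log (Real.cosh (β*x)) + 1)
      + Real.sinh (β*x)^2 / Real.cosh (β*x))
    - x * (Real.sinh (β*x) * (Real.log (Real.cosh (β*x)) + 1)))
  have hderiv : ∀ x : ℝ, HasDerivAt G (g' x) x := fun x => hasDerivAt_G β x
  have hint : Integrable g' := by
    have h := ((int_coshL1sq β).const_mul β).sub (int_xsinh β)
    refine h.congr (ae_of_all _ fun x => ?_)
    simp only [Pi.sub_apply, g']; ring
  -- G tends to 0 at ±∞
  have hGb : ∀ x : ℝ, |G x| ≤ (Real.sqrt (2*π))⁻¹ * (1+|β|) * rexp ((|β|+1)*|x| - x^2/2) := by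
    intro x
    rw [hG]
    simp only []
    rw [abs_mul, abs_of_nonneg (phi_nonneg x)]
    unfold phi
    calc (Real.sqrt (2*π))⁻¹ * rexp (-x^2/2)
          * |Real.sinh (β*x) * (Real.log (Real.cosh (β*x)) + 1)|
        ≤ (Real.sqrt (2*π))⁻¹ * rexp (-x^2/2) * ((1+|β|) * rexp ((|β|+1)*|x|)) :=
          mul_le_mul_of_nonneg_left (bound_sinhL1 (le_refl |β|)) (by positivity)
      _ = (Real.sqrt (2*π))⁻¹ * (1+|β|) * rexp ((|β|+1)*|x| - x^2/2) := by
          rw [show (|β|+1)*|x| - x^2/2 = (|β|+1)*|x| + (-x^2/2) by ring, Real.exp_add]; ring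
  have hsq : ∀ l : Filter ℝ, Filter.Tendsto (fun x : ℝ => x^2) l Filter.atTop →
      Filter.Tendsto G l (nhds 0) := by
    intro l hl
    have hB := (tendsto_B (|β|+1) l hl).const_mul ((Real.sqrt (2*π))⁻¹ * (1+|β|))
    rw [mul_zero] at hB
    refine squeeze_zero_norm (fun x => ?_) hB
    simpa [Real.norm_eq_abs] using hGb x
  have htop : Filter.Tendsto G Filter.atTop (nhds 0) := hsq _ sq_tendsto_atTop
  have hbot : Filter.Tendsto G Filter.atBot (nhds 0) := hsq _ sq_tendsto_atBot
  have h1 : ∫ x in Set.Ioi (0:ℝ), g' x = 0 - G 0 :=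
    integral_Ioi_of_hasDerivAt_of_tendsto' (fun x _ => hderiv x) hint.integrableOn htop
  have h2 : ∫ x in Set.Iic (0:ℝ), g' x = G 0 - 0 :=
    integral_Iic_of_hasDerivAt_of_tendsto' (fun x _ => hderiv x) hint.integrableOn hbot
  have h3 : ∫ x, g' x = 0 := by
    rw [← intervalIntegral.integral_Iic_add_Ioi hint.integrableOn hint.integrableOn, h1, h2]; ring
  have h4 : ∫ x, g' x = β * (∫ x, phi x * (Real.cosh (β*x) * (Real.log (Real.cosh (β*x)) + 1)
        + Real.sinh (β*x)^2 / Real.cosh (β*x)))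
      - ∫ x, phi x * (x * Real.sinh (β*x) * (Real.log (Real.cosh (β*x)) + 1)) := by
    rw [← integral_const_mul β, ← integral_sub ((int_coshL1sq β).const_mul β) (int_xsinh β)]
    refine integral_congr_ae (ae_of_all _ fun x => ?_)
    simp only [g']; ring
  rw [h3] at h4
  linarith

lemma phi_mul_bound (x : ℝ) {t C a : ℝ} (ht : |t| ≤ C * rexp (a*|x|)) :
    |phi x * t| ≤ (Real.sqrt (2*π))⁻¹ * C * rexp (a*|x| - x^2/2) := by
  rw [abs_mul, abs_of_nonneg (phi_nonneg x)]
  unfold phi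
  calc (Real.sqrt (2*π))⁻¹ * rexp (-x^2/2) * |t|
      ≤ (Real.sqrt (2*π))⁻¹ * rexp (-x^2/2) * (C * rexp (a*|x|)) :=
        mul_le_mul_of_nonneg_left ht (by positivity)
    _ = (Real.sqrt (2*π))⁻¹ * C * rexp (a*|x| - x^2/2) := by
        rw [show a*|x| - x^2/2 = a*|x| + (-x^2/2) by ring, Real.exp_add]; ring

lemma hasDerivAt_K (β₀ : ℝ) :
    HasDerivAt (fun β => ∫ x, phi x * (Real.cosh (β*x) * Real.log (Real.cosh (β*x))))
      (∫ x, phi x * (x * Real.sinh (β₀*x) * (Real.log (Real.cosh (β₀*x)) + 1))) β₀ := by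
  set b := |β₀| + 1 with hb
  have h := hasDerivAt_integral_of_dominated_loc_of_deriv_le (μ := (volume : Measure ℝ))
    (F := fun β x => phi x * (Real.cosh (β*x) * Real.log (Real.cosh (β*x))))
    (F' := fun β x => phi x * (x * Real.sinh (β*x) * (Real.log (Real.cosh (β*x)) + 1)))
    (x₀ := β₀) (s := Metric.ball β₀ 1)
    (bound := fun x => (Real.sqrt (2*π))⁻¹ * (2+b) * rexp ((b+2)*|x| - x^2/2))
    (Metric.ball_mem_nhds β₀ one_pos)
    (Filter.Eventually.of_forall fun β =>
      (continuous_phi.mul ((cont_coshb β).mul (cont_L β))).aestronglyMeasurable)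
    (int_coshL β₀)
    ((continuous_phi.mul ((continuous_id.mul (cont_sinhb β₀)).mul
      ((cont_L β₀).add continuous_const))).aestronglyMeasurable)
    (ae_of_all _ fun x β hβ => ?_)
    (((integrable_B (b+2)).const_mul _))
    (ae_of_all _ fun x β hβ => ?_)
  · exact h.2
  · have hβb : |β| ≤ b := by
      rw [Metric.mem_ball, Real.dist_eq] at hβ
      rw [hb]
      have := abs_sub_abs_le_abs_sub β β₀
      linarith
    rw [Real.norm_eq_abs]
    exact phi_mul_bound x (bound_main hβb)
  · exact (hasDerivAt_inner x β).const_mul (phi x)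

lemma integrable_phi : Integrable phi := phi_eq ▸ integrable_gaussianPDFReal 0 1

lemma integral_phi : ∫ x, phi x = 1 := phi_eq ▸ integral_gaussianPDFReal_eq_one 0 one_ne_zero

theorem deriv_H_gaussian_coshLogCosh
    (H : ℝ → ℝ)
    (hH : H = fun β => Real.exp (-β ^ 2 / 2) *
      ∫ x, Real.cosh (β * x) * Real.log (Real.cosh (β * x)) ∂(gaussianReal 0 1)) :
    (∀ β : ℝ, deriv H β = β * Real.exp (-β ^ 2 / 2) *
      ((∫ x, Real.cosh (β * x) ∂(gaussianReal 0 1)) +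
       ∫ x, Real.sinh (β * x) ^ 2 / Real.cosh (β * x) ∂(gaussianReal 0 1))) ∧
    (∀ β : ℝ, 0 < β → 0 < deriv H β) := by
  have hH' : H = fun β => rexp (-β^2/2) *
      ∫ x, phi x * (Real.cosh (β*x) * Real.log (Real.cosh (β*x))) := by
    rw [hH]; funext β
    rw [← integral_gauss (fun x => Real.cosh (β*x) * Real.log (Real.cosh (β*x)))]
  have key : ∀ β : ℝ, deriv H β = β * Real.exp (-β ^ 2 / 2) *
      ((∫ x, Real.cosh (β * x) ∂(gaussianReal 0 1)) +
       ∫ x, Real.sinh (β * x) ^ 2 / Real.cosh (β * x) ∂(gaussianReal 0 1)) := by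
    intro β
    have h1 : HasDerivAt (fun β : ℝ => rexp (-β^2/2)) (-β * rexp (-β^2/2)) β := by
      have h0 : HasDerivAt (fun y : ℝ => -y^2/2) (-β) β := by
        have : HasDerivAt (fun y : ℝ => -y^2/2) _ β := ((hasDerivAt_pow 2 β).neg).div_const 2
        convert this using 1
        simp; ring
      have : HasDerivAt (fun β : ℝ => rexp (-β^2/2)) _ β := h0.exp
      convert this using 1; ring
    have hK := hasDerivAt_K β
    have hprod : HasDerivAt (fun β : ℝ => rexp (-β^2/2) *
        ∫ x, phi x * (Real.cosh (β*x) * Real.log (Real.cosh (β*x)))) _ β := h1.mul hK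
    rw [← hH'] at hprod
    have hd := hprod.deriv
    rw [hd, ibp β]
    have hsplit : ∫ x, phi x * (Real.cosh (β*x) * (Real.log (Real.cosh (β*x)) + 1)
          + Real.sinh (β*x)^2 / Real.cosh (β*x))
        = (∫ x, phi x * (Real.cosh (β*x) * Real.log (Real.cosh (β*x))))
          + ((∫ x, phi x * Real.cosh (β*x)) + ∫ x, phi x * (Real.sinh (β*x)^2 / Real.cosh (β*x))) := by
      calc ∫ x, phi x * (Real.cosh (β*x) * (Real.log (Real.cosh (β*x)) + 1)
              + Real.sinh (β*x)^2 / Real.cosh (β*x))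
          = ∫ x, (phi x * (Real.cosh (β*x) * Real.log (Real.cosh (β*x)))
              + (phi x * Real.cosh (β*x) + phi x * (Real.sinh (β*x)^2 / Real.cosh (β*x)))) :=
            integral_congr_ae (ae_of_all _ fun x => by ring)
        _ = (∫ x, phi x * (Real.cosh (β*x) * Real.log (Real.cosh (β*x))))
              + ∫ x, (phi x * Real.cosh (β*x) + phi x * (Real.sinh (β*x)^2 / Real.cosh (β*x))) :=
            integral_add (int_coshL β) ((int_cosh β).add (int_sinhsq β))
        _ = _ := by rw [integral_add (int_cosh β) (int_sinhsq β)]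
    rw [hsplit, integral_gauss (fun x => Real.cosh (β*x)),
      integral_gauss (fun x => Real.sinh (β*x)^2 / Real.cosh (β*x))]
    ring
  refine ⟨key, fun β hβ => ?_⟩
  rw [key β]
  have hC : 1 ≤ ∫ x, phi x * Real.cosh (β*x) := by
    rw [← integral_phi]
    refine integral_mono integrable_phi (int_cosh β) fun x => ?_
    nlinarith [phi_nonneg x, Real.one_le_cosh (β*x)]
  have hS : 0 ≤ ∫ x, phi x * (Real.sinh (β*x)^2 / Real.cosh (β*x)) :=
    integral_nonneg fun x => mul_nonneg (phi_nonneg x) (by positivity)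
  rw [integral_gauss (fun x => Real.cosh (β*x)),
    integral_gauss (fun x => Real.sinh (β*x)^2 / Real.cosh (β*x))]
  have h2 : 0 < (∫ x, phi x * Real.cosh (β*x))
      + ∫ x, phi x * (Real.sinh (β*x)^2 / Real.cosh (β*x)) := by linarith
  exact mul_pos (mul_pos hβ (Real.exp_pos _)) h2
end
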